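/- Let k ≥ 2, let 2 ≤ ℓ, and suppose there exists a family 𝒮 of subsets of an (n−1)-element vertex set V', each member of size ℓ−2, such that every (k−1)-subset of V' is contained in exactly one member of 𝒮. Let G be the k-graph on V = V' ∪ {w} (where w ∉ V') whose edges are all k-subsets of some member of 𝒮 together with all k-sets containing w. Then e(G) = ((ℓ−1)/k)·binom(n−1, k−1). -/

import Mathlib

open Finset

/-- Uniqueness of the covering block: if a set of size ≥ k-1 lies in two members of the
design, the members coincide. -/
lemma design_unique {k : ℕ} {V' : Type*} [DecidableEq V']
    (𝒮 : Finset (Finset V'))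
    (hdesign : ∀ T : Finset V', T.card = k - 1 → (𝒮.filter fun S => T ⊆ S).card = 1)
    {T S S' : Finset V'} (hT : T.card = k - 1)
    (hS : S ∈ 𝒮) (hS' : S' ∈ 𝒮) (h1 : T ⊆ S) (h2 : T ⊆ S') : S = S' := by
  obtain ⟨a, ha⟩ := Finset.card_eq_one.mp (hdesign T hT)
  have e1 : S ∈ 𝒮.filter fun S => T ⊆ S := Finset.mem_filter.mpr ⟨hS, h1⟩
  have e2 : S' ∈ 𝒮.filter fun S => T ⊆ S := Finset.mem_filter.mpr ⟨hS', h2⟩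
  rw [ha, Finset.mem_singleton] at e1 e2
  rw [e1, e2]

/-- Suppose `𝒮` is a family of `(ℓ−2)`-subsets of an `(n−1)`-element
set `V'` covering every `(k−1)`-subset of `V'` exactly once, and let `G` be the `k`-graph
on `V = V' ∪ {w}` whose edges are all `k`-subsets of members of `𝒮` together with all
`k`-sets containing the extra vertex `w`. Then `e(G) = ((ℓ−1)/k)·binom(n−1, k−1)`. -/
theorem design_extremal_count (k ℓ n : ℕ) (hk : 2 ≤ k) (hℓ : 2 ≤ ℓ)
    {V' : Type*} [DecidableEq V'] [Fintype V'] (hn : Fintype.card V' + 1 = n)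
    (𝒮 : Finset (Finset V'))
    (hScard : ∀ S ∈ 𝒮, S.card = ℓ - 2)
    (hdesign : ∀ T : Finset V', T.card = k - 1 → (𝒮.filter fun S => T ⊆ S).card = 1) :
    (((Finset.univ.powersetCard k : Finset (Finset (Option V'))).filter fun e =>
        none ∈ e ∨ ∃ S ∈ 𝒮, e ⊆ S.image some).card : ℝ)
      = ((ℓ : ℝ) - 1) / k * (Nat.choose (Fintype.card V') (k - 1)) := by
  classical
  set m := Fintype.card V' with hm
  have hk1 : k - 1 + 1 = k := by omega
  -- split the edge set
  have hsplit : ((Finset.univ.powersetCard k : Finset (Finset (Option V'))).filter fun e =>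
        none ∈ e ∨ ∃ S ∈ 𝒮, e ⊆ S.image some)
      = ((Finset.univ.powersetCard k : Finset (Finset (Option V'))).filter fun e => none ∈ e)
        ∪ ((Finset.univ.powersetCard k : Finset (Finset (Option V'))).filter fun e =>
            ∃ S ∈ 𝒮, e ⊆ S.image some) := Finset.filter_or _ _ _
  have hdisj : Disjoint
      ((Finset.univ.powersetCard k : Finset (Finset (Option V'))).filter fun e => none ∈ e)
      ((Finset.univ.powersetCard k : Finset (Finset (Option V'))).filter fun e =>
          ∃ S ∈ 𝒮, e ⊆ S.image some) := by
    rw [Finset.disjoint_left]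
    intro e he1 he2
    obtain ⟨-, hne⟩ := Finset.mem_filter.mp he1
    obtain ⟨-, S, -, hsub⟩ := Finset.mem_filter.mp he2
    obtain ⟨x, -, hx⟩ := Finset.mem_image.mp (hsub hne)
    exact Option.some_ne_none x hx
  -- count of edges containing `none`
  have hA : ((Finset.univ.powersetCard k : Finset (Finset (Option V'))).filter
      fun e => none ∈ e).card = m.choose (k - 1) := by
    rw [show m.choose (k-1) = ((Finset.univ.powersetCard (k-1) : Finset (Finset V'))).card by
      rw [Finset.card_powersetCard, Finset.card_univ]]
    apply Finset.card_bij (fun e _ => (e.erase none).preimage some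
      (Option.some_injective V').injOn)
    · intro e he
      obtain ⟨hsub, hne⟩ := Finset.mem_filter.mp he
      rw [Finset.mem_powersetCard] at hsub ⊢
      refine ⟨Finset.subset_univ _, ?_⟩
      have himg : Finset.image some ((e.erase none).preimage some
          (Option.some_injective V').injOn) = e.erase none := by
        rw [Finset.image_preimage]
        ext o
        simp only [Finset.mem_filter, Finset.mem_erase, Set.mem_range]
        constructor
        · rintro ⟨h, -⟩; exact h
        · rintro ⟨h1, h2⟩
          exact ⟨⟨h1, h2⟩, Option.ne_none_iff_exists.mp h1⟩
      have := congrArg Finset.card himg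
      rw [Finset.card_image_of_injective _ (Option.some_injective V'),
        Finset.card_erase_of_mem hne, hsub.2] at this
      exact this
    · intro e1 h1 e2 h2 heq
      obtain ⟨-, hn1⟩ := Finset.mem_filter.mp h1
      obtain ⟨-, hn2⟩ := Finset.mem_filter.mp h2
      ext o
      rcases o with _ | x
      · simp [hn1, hn2]
      · have := congrArg (fun s => x ∈ s) heq
        simpa [Finset.mem_preimage] using this
    · intro T hT
      rw [Finset.mem_powersetCard] at hT
      refine ⟨insert none (T.image some), ?_, ?_⟩
      · rw [Finset.mem_filter, Finset.mem_powersetCard]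
        have hnn : (none : Option V') ∉ T.image some := by simp
        refine ⟨⟨Finset.subset_univ _, ?_⟩, Finset.mem_insert_self _ _⟩
        rw [Finset.card_insert_of_notMem hnn,
          Finset.card_image_of_injective _ (Option.some_injective V'), hT.2, hk1]
      · ext x
        simp [Finset.mem_preimage]
  -- count of edges inside a member of 𝒮
  have hB : ((Finset.univ.powersetCard k : Finset (Finset (Option V'))).filter fun e =>
      ∃ S ∈ 𝒮, e ⊆ S.image some).card = 𝒮.card * (ℓ - 2).choose k := by
    have heq : ((Finset.univ.powersetCard k : Finset (Finset (Option V'))).filter fun e =>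
        ∃ S ∈ 𝒮, e ⊆ S.image some) = 𝒮.biUnion fun S => (S.image some).powersetCard k := by
      ext e
      simp only [Finset.mem_filter, Finset.mem_biUnion, Finset.mem_powersetCard]
      constructor
      · rintro ⟨⟨-, hcard⟩, S, hS, hsub⟩; exact ⟨S, hS, hsub, hcard⟩
      · rintro ⟨S, hS, hsub, hcard⟩; exact ⟨⟨Finset.subset_univ _, hcard⟩, S, hS, hsub⟩
    rw [heq, Finset.card_biUnion]
    · rw [Finset.sum_congr rfl fun S hS => ?_, Finset.sum_const, smul_eq_mul]
      rw [Finset.card_powersetCard,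
        Finset.card_image_of_injective _ (Option.some_injective V'), hScard S hS]
    · intro S hS S' hS' hne
      rw [Function.onFun, Finset.disjoint_left]
      intro e he1 he2
      rw [Finset.mem_powersetCard] at he1 he2
      obtain ⟨U, hUS, hUe⟩ := Finset.subset_image_iff.mp he1.1
      have hUcard : U.card = k := by
        rw [← he1.2, ← hUe, Finset.card_image_of_injective _ (Option.some_injective V')]
      obtain ⟨T, hTU, hTcard⟩ := Finset.exists_subset_card_eq
        (show k - 1 ≤ U.card by omega)
      have hTS : T ⊆ S := hTU.trans hUS
      have hTS' : T ⊆ S' := by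
        rw [← Finset.image_subset_image_iff (Option.some_injective V')]
        exact (Finset.image_subset_image hTU).trans (hUe ▸ he2.1)
      exact hne (design_unique 𝒮 hdesign hTcard hS hS' hTS hTS')
  -- the design double count
  have hkey : 𝒮.card * (ℓ - 2).choose (k - 1) = m.choose (k - 1) := by
    have h1 : ∀ T ∈ (Finset.univ.powersetCard (k-1) : Finset (Finset V')),
        (𝒮.filter fun S => T ⊆ S).card = 1 := by
      intro T hT
      exact hdesign T (Finset.mem_powersetCard.mp hT).2
    calc 𝒮.card * (ℓ - 2).choose (k - 1)
        = ∑ S ∈ 𝒮, (S.powersetCard (k-1)).card := by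
          rw [Finset.sum_congr rfl fun S hS => by
            rw [Finset.card_powersetCard, hScard S hS], Finset.sum_const, smul_eq_mul]
      _ = ∑ S ∈ 𝒮, ((Finset.univ.powersetCard (k-1) : Finset (Finset V')).filter
            fun T => T ⊆ S).card := by
          refine Finset.sum_congr rfl fun S hS => ?_
          congr 1
          ext T
          simp only [Finset.mem_powersetCard, Finset.mem_filter]
          constructor
          · rintro ⟨h1, h2⟩
            exact ⟨⟨Finset.subset_univ _, h2⟩, h1⟩
          · rintro ⟨⟨-, h2⟩, h1⟩; exact ⟨h1, h2⟩
      _ = ∑ S ∈ 𝒮, ∑ T ∈ (Finset.univ.powersetCard (k-1) : Finset (Finset V')),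
            if T ⊆ S then 1 else 0 := by
          refine Finset.sum_congr rfl fun S hS => ?_
          rw [Finset.card_filter]
      _ = ∑ T ∈ (Finset.univ.powersetCard (k-1) : Finset (Finset V')),
            ∑ S ∈ 𝒮, if T ⊆ S then 1 else 0 := Finset.sum_comm
      _ = ∑ T ∈ (Finset.univ.powersetCard (k-1) : Finset (Finset V')), 1 := by
          refine Finset.sum_congr rfl fun T hT => ?_
          rw [← Finset.card_filter]
          exact h1 T hT
      _ = m.choose (k - 1) := by
          rw [Finset.sum_const, smul_eq_mul, mul_one, Finset.card_powersetCard,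
            Finset.card_univ]
  -- put everything together
  rw [hsplit, Finset.card_union_of_disjoint hdisj, hA, hB]
  push_cast
  rcases le_or_gt (k - 1) (ℓ - 2) with hle | hlt
  · -- ℓ ≥ k + 1
    have hℓk : k + 1 ≤ ℓ := by omega
    have hchoose : ((ℓ - 2).choose k : ℝ) * k = ((ℓ - 2).choose (k-1) : ℝ) * ((ℓ:ℝ) - 1 - k) := by
      have := Nat.choose_succ_right_eq (ℓ - 2) (k - 1)
      rw [hk1] at this
      have hcast := congrArg (fun x : ℕ => (x : ℝ)) this
      push_cast [Nat.cast_sub hle, Nat.cast_sub (show 2 ≤ ℓ from hℓ),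
        Nat.cast_sub (show 1 ≤ k by omega)] at hcast
      rw [hcast]; ring
    have hkeyR : (𝒮.card : ℝ) * ((ℓ - 2).choose (k-1) : ℝ) = (m.choose (k-1) : ℝ) := by
      exact_mod_cast congrArg (fun x : ℕ => (x : ℝ)) hkey
    have hk0 : (k : ℝ) ≠ 0 := by positivity
    field_simp
    ring_nf
    nlinarith [hchoose, hkeyR, sq_nonneg ((𝒮.card : ℝ))]
  · -- degenerate case: all counts vanish
    have h1 : (ℓ - 2).choose (k - 1) = 0 := Nat.choose_eq_zero_of_lt hlt
    have h2 : (ℓ - 2).choose k = 0 := Nat.choose_eq_zero_of_lt (by omega)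
    have h3 : m.choose (k - 1) = 0 := by rw [← hkey, h1, mul_zero]
    rw [h2, h3]
    simp
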